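/- In Minkowski space, the null hyperplane containing a null line ℓ equals the boundary of the timelike future of ℓ, and also equals the boundary of the timelike past of ℓ: Π = ∂I⁺(ℓ) = ∂I⁻(ℓ). -/

import Mathlib

open scoped BigOperators

/-- The Minkowski bilinear form on `Fin n → ℝ`:
`η(u,v) = -u₀v₀ + Σᵢ₌₁ uᵢvᵢ = (Σᵢ uᵢvᵢ) - 2 u₀v₀`. -/
def eta (n : ℕ) [NeZero n] (u v : Fin n → ℝ) : ℝ :=
  (∑ i, u i * v i) - 2 * u 0 * v 0

lemma eta_add_left (n : ℕ) [NeZero n] (u w z : Fin n → ℝ) :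
    eta n (u + w) z = eta n u z + eta n w z := by
  have h : ∑ i, (u i + w i) * z i = (∑ i, u i * z i) + ∑ i, w i * z i := by
    rw [← Finset.sum_add_distrib]
    exact Finset.sum_congr rfl fun i _ => by ring
  simp only [eta, Pi.add_apply, h]; ring

lemma eta_smul_left (n : ℕ) [NeZero n] (c : ℝ) (u z : Fin n → ℝ) :
    eta n (c • u) z = c * eta n u z := by
  have h : ∑ i, (c * u i) * z i = c * ∑ i, u i * z i := by
    rw [Finset.mul_sum]
    exact Finset.sum_congr rfl fun i _ => by ring
  simp only [eta, Pi.smul_apply, smul_eq_mul, h]; ring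

lemma eta_neg_left (n : ℕ) [NeZero n] (u z : Fin n → ℝ) :
    eta n (-u) z = - eta n u z := by
  have : eta n ((-1 : ℝ) • u) z = (-1 : ℝ) * eta n u z := eta_smul_left n (-1) u z
  simpa using this

lemma eta_expand (n : ℕ) [NeZero n] (w v : Fin n → ℝ) (t : ℝ) :
    eta n (w - t • v) (w - t • v)
      = eta n w w - 2 * t * eta n w v + t ^ 2 * eta n v v := by
  have h : ∑ i, (w i - t * v i) * (w i - t * v i)
      = ((∑ i, w i * w i) - 2 * t * (∑ i, w i * v i)) + t ^ 2 * (∑ i, v i * v i) := by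
    rw [Finset.mul_sum, Finset.mul_sum, ← Finset.sum_sub_distrib, ← Finset.sum_add_distrib]
    exact Finset.sum_congr rfl fun i _ => by ring
  simp only [eta, Pi.sub_apply, Pi.smul_apply, smul_eq_mul, h]; ring

/-- Sign lemma: a future timelike vector pairs negatively with a future null vector. -/
lemma eta_timelike_null (n : ℕ) [NeZero n] (u v : Fin n → ℝ) (hu : eta n u u < 0)
    (hu0 : 0 < u 0) (hv : eta n v v = 0) (hv0 : 0 < v 0) : eta n u v < 0 := by
  classical
  set s := Finset.univ.erase (0 : Fin n) with hs
  have hsu : u 0 * u 0 + ∑ i ∈ s, u i * u i = ∑ i, u i * u i :=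
    Finset.add_sum_erase Finset.univ (fun i => u i * u i) (Finset.mem_univ 0)
  have hsv : v 0 * v 0 + ∑ i ∈ s, v i * v i = ∑ i, v i * v i :=
    Finset.add_sum_erase Finset.univ (fun i => v i * v i) (Finset.mem_univ 0)
  have hsuv : u 0 * v 0 + ∑ i ∈ s, u i * v i = ∑ i, u i * v i :=
    Finset.add_sum_erase Finset.univ (fun i => u i * v i) (Finset.mem_univ 0)
  have hcs := Finset.sum_mul_sq_le_sq_mul_sq s u v
  have hq1 : ∑ i ∈ s, u i ^ 2 = ∑ i ∈ s, u i * u i :=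
    Finset.sum_congr rfl fun i _ => sq (u i)
  have hq2 : ∑ i ∈ s, v i ^ 2 = ∑ i ∈ s, v i * v i :=
    Finset.sum_congr rfl fun i _ => sq (v i)
  rw [hq1, hq2] at hcs
  have hSu : (0:ℝ) ≤ ∑ i ∈ s, u i * u i :=
    Finset.sum_nonneg fun i _ => mul_self_nonneg _
  simp only [eta] at hu hv ⊢
  rw [← hsu] at hu
  rw [← hsv] at hv
  rw [← hsuv]
  have hSulta : ∑ i ∈ s, u i * u i < u 0 * u 0 := by linarith
  have hSvv : ∑ i ∈ s, v i * v i = v 0 * v 0 := by linarith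
  have key : (∑ i ∈ s, u i * v i) ^ 2 < (u 0 * v 0) * (u 0 * v 0) := by
    calc (∑ i ∈ s, u i * v i) ^ 2 ≤ (∑ i ∈ s, u i * u i) * (v 0 * v 0) := by
          rw [← hSvv]; exact hcs
      _ < (u 0 * u 0) * (v 0 * v 0) :=
          mul_lt_mul_of_pos_right hSulta (mul_pos hv0 hv0)
      _ = (u 0 * v 0) * (u 0 * v 0) := by ring
  nlinarith [mul_pos hu0 hv0, key]

lemma eta_neg_neg (n : ℕ) [NeZero n] (u : Fin n → ℝ) :
    eta n (-u) (-u) = eta n u u := by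
  have h : ∑ i, -u i * -u i = ∑ i, u i * u i :=
    Finset.sum_congr rfl fun i _ => by ring
  simp only [eta, Pi.neg_apply]
  rw [h]; ring

lemma eta_timelike_null_past (n : ℕ) [NeZero n] (u v : Fin n → ℝ) (hu : eta n u u < 0)
    (hu0 : u 0 < 0) (hv : eta n v v = 0) (hv0 : 0 < v 0) : 0 < eta n u v := by
  have h1 : eta n (-u) (-u) < 0 := by rw [eta_neg_neg]; exact hu
  have h2 : 0 < (-u) 0 := by simp only [Pi.neg_apply]; linarith
  have := eta_timelike_null n (-u) v h1 h2 hv hv0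
  rw [eta_neg_left] at this
  linarith

/-- Frontier of an open half space `{g < 0}` for an affine function which is
strictly decreasing along some direction. -/
lemma frontier_lt_of {E : Type*} [NormedAddCommGroup E] [NormedSpace ℝ E]
    (g : E → ℝ) (hg : Continuous g) (d : E) (b : ℝ) (hb : 0 < b)
    (hgd : ∀ x c, g (x + c • d) = g x - c * b) :
    frontier {x | g x < 0} = {x | g x = 0} := by
  have hopen : IsOpen {x | g x < 0} := isOpen_lt hg continuous_const
  have hcl : closure {x | g x < 0} = {x | g x ≤ 0} := by
    apply Set.Subset.antisymm
    · exact closure_minimal (Set.setOf_subset_setOf.mpr fun x => le_of_lt)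
        (isClosed_le hg continuous_const)
    · intro x hx
      have htend : Filter.Tendsto (fun c : ℝ => x + c • d)
          (nhdsWithin 0 (Set.Ioi 0)) (nhds x) := by
        have h0 : Filter.Tendsto (fun c : ℝ => x + c • d) (nhds 0) (nhds x) := by
          have hc : Continuous fun c : ℝ => x + c • d :=
            continuous_const.add (continuous_id.smul continuous_const)
          have := hc.tendsto 0
          simpa using this
        exact h0.mono_left nhdsWithin_le_nhds
      refine mem_closure_of_tendsto htend ?_
      filter_upwards [self_mem_nhdsWithin] with c hc
      have hcb : 0 < c * b := mul_pos hc hb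
      have hx' : g x ≤ 0 := hx
      simp only [Set.mem_setOf_eq, hgd]
      linarith
  rw [frontier, hcl, hopen.interior_eq]
  ext x
  simp only [Set.mem_diff, Set.mem_setOf_eq, not_lt]
  exact ⟨fun h => le_antisymm h.1 h.2, fun h => ⟨le_of_eq h, ge_of_eq h⟩⟩

lemma frontier_gt_of {E : Type*} [NormedAddCommGroup E] [NormedSpace ℝ E]
    (g : E → ℝ) (hg : Continuous g) (d : E) (b : ℝ) (hb : 0 < b)
    (hgd : ∀ x c, g (x + c • d) = g x - c * b) :
    frontier {x | 0 < g x} = {x | g x = 0} := by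
  have h1 : {x : E | 0 < g x} = {x | (fun y => -g y) x < 0} := by
    ext x; simp [neg_lt_zero]
  have h2 := frontier_lt_of (fun y => -g y) hg.neg (-d) b hb (by
    intro x c
    show -g (x + c • (-d)) = -g x - c * b
    have hxc : x + c • (-d) = x + (-c) • d := by rw [smul_neg, neg_smul]
    rw [hxc, hgd]; ring)
  rw [h1, h2]
  ext x; simp [neg_eq_zero]

/-- In Minkowski space the null hyperplane containing a null line `ℓ` equals
the boundary of the timelike future of `ℓ`, and also the boundary of the
timelike past of `ℓ`: `Π = ∂I⁺(ℓ) = ∂I⁻(ℓ)`. -/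
theorem null_hyperplane_eq_boundaries (n : ℕ) [NeZero n] (hn : 3 ≤ n)
    (p v : Fin n → ℝ) (hnull : eta n v v = 0) (hfut : 0 < v 0) :
    ({x | eta n (x - p) v = 0} =
      frontier {x | ∃ a ∈ {y | ∃ t : ℝ, y = p + t • v},
        eta n (x - a) (x - a) < 0 ∧ a 0 < x 0}) ∧
    ({x | eta n (x - p) v = 0} =
      frontier {x | ∃ a ∈ {y | ∃ t : ℝ, y = p + t • v},
        eta n (x - a) (x - a) < 0 ∧ x 0 < a 0}) := by
  classical
  set g : (Fin n → ℝ) → ℝ := fun x => eta n (x - p) v with hgdef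
  -- continuity of g
  have hg : Continuous g := by
    have : Continuous fun x : Fin n → ℝ => (∑ i, (x i - p i) * v i) - 2 * (x 0 - p 0) * v 0 := by
      apply Continuous.sub
      · apply continuous_finset_sum
        intro i _
        exact ((continuous_apply i).sub continuous_const).mul continuous_const
      · exact (continuous_const.mul ((continuous_apply 0).sub continuous_const)).mul
          continuous_const
    simpa [hgdef, eta] using this
  -- the displacement direction
  set d : Fin n → ℝ := Pi.single 0 1 with hd
  have hetad : eta n d v = -(v 0) := by
    have hsum : ∑ i, d i * v i = v 0 := by
      rw [hd]
      rw [Finset.sum_eq_single 0]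
      · simp
      · intro i _ hi; simp [Pi.single_apply, hi]
      · simp
    rw [eta, hsum, hd, Pi.single_eq_same]; ring
  have hgd : ∀ x c, g (x + c • d) = g x - c * v 0 := by
    intro x c
    have hx : x + c • d - p = (x - p) + c • d := by abel
    rw [hgdef]
    simp only
    rw [hx, eta_add_left, eta_smul_left, hetad]
    ring
  -- characterization of the chronological future
  have hfutset : {x | ∃ a ∈ {y | ∃ t : ℝ, y = p + t • v},
      eta n (x - a) (x - a) < 0 ∧ a 0 < x 0} = {x | g x < 0} := by
    ext x
    simp only [Set.mem_setOf_eq]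
    constructor
    · rintro ⟨a, ⟨t, rfl⟩, htl, hlt⟩
      set u := x - (p + t • v) with hu
      have hu0 : 0 < u 0 := by
        have : (p + t • v) 0 < x 0 := hlt
        simp only [hu, Pi.sub_apply]
        linarith
      have hneg : eta n u v < 0 := eta_timelike_null n u v htl hu0 hnull hfut
      have hx : x - p = u + t • v := by rw [hu]; abel
      rw [hgdef]
      simp only
      rw [hx, eta_add_left, eta_smul_left, hnull]
      linarith
    · intro h
      set w := x - p with hw
      have hcneg : eta n w v < 0 := h
      set t : ℝ := min (eta n w w / (2 * eta n w v)) (w 0 / v 0) - 1 with ht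
      refine ⟨p + t • v, ⟨t, rfl⟩, ?_, ?_⟩
      · have hx : x - (p + t • v) = w - t • v := by rw [hw]; abel
        rw [hx, eta_expand, hnull]
        have ht1 : t < eta n w w / (2 * eta n w v) := by
          have := min_le_left (eta n w w / (2 * eta n w v)) (w 0 / v 0)
          rw [ht]; linarith
        have h2c : 2 * eta n w v < 0 := by linarith
        have := (lt_div_iff_of_neg h2c).mp ht1
        nlinarith
      · have ht2 : t < w 0 / v 0 := by
          have := min_le_right (eta n w w / (2 * eta n w v)) (w 0 / v 0)
          rw [ht]; linarith
        have : t * v 0 < w 0 := (lt_div_iff₀ hfut).mp ht2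
        have hw0 : w 0 = x 0 - p 0 := by rw [hw]; simp
        simp only [Pi.add_apply, Pi.smul_apply, smul_eq_mul]
        linarith [hw0 ▸ this]
  -- characterization of the chronological past
  have hpastset : {x | ∃ a ∈ {y | ∃ t : ℝ, y = p + t • v},
      eta n (x - a) (x - a) < 0 ∧ x 0 < a 0} = {x | 0 < g x} := by
    ext x
    simp only [Set.mem_setOf_eq]
    constructor
    · rintro ⟨a, ⟨t, rfl⟩, htl, hlt⟩
      set u := x - (p + t • v) with hu
      have hu0 : u 0 < 0 := by
        have : x 0 < (p + t • v) 0 := hlt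
        simp only [hu, Pi.sub_apply]
        linarith
      have hpos : 0 < eta n u v := eta_timelike_null_past n u v htl hu0 hnull hfut
      have hx : x - p = u + t • v := by rw [hu]; abel
      rw [hgdef]
      simp only
      rw [hx, eta_add_left, eta_smul_left, hnull]
      linarith
    · intro h
      set w := x - p with hw
      have hcpos : 0 < eta n w v := h
      set t : ℝ := max (eta n w w / (2 * eta n w v)) (w 0 / v 0) + 1 with ht
      refine ⟨p + t • v, ⟨t, rfl⟩, ?_, ?_⟩
      · have hx : x - (p + t • v) = w - t • v := by rw [hw]; abel
        rw [hx, eta_expand, hnull]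
        have ht1 : eta n w w / (2 * eta n w v) < t := by
          have := le_max_left (eta n w w / (2 * eta n w v)) (w 0 / v 0)
          rw [ht]; linarith
        have h2c : 0 < 2 * eta n w v := by linarith
        have := (div_lt_iff₀ h2c).mp ht1
        nlinarith
      · have ht2 : w 0 / v 0 < t := by
          have := le_max_right (eta n w w / (2 * eta n w v)) (w 0 / v 0)
          rw [ht]; linarith
        have hlt : w 0 < t * v 0 := by
          have := (div_lt_iff₀ hfut).mp ht2
          linarith
        have hw0 : w 0 = x 0 - p 0 := by rw [hw]; simp
        simp only [Pi.add_apply, Pi.smul_apply, smul_eq_mul]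
        linarith [hw0 ▸ hlt]
  constructor
  · rw [hfutset, frontier_lt_of g hg d (v 0) hfut hgd]
  · rw [hpastset, frontier_gt_of g hg d (v 0) hfut hgd]
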